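/- The first Čech (shape) invariant in the abelian setting: every inverse limit of a sequence of finitely generated free abelian groups with surjective bonding maps is isomorphic to ℤ^n for some finite n, or to ℤ^ω. -/

import Mathlib

/-- Reindexing a power of ℤ along an equivalence of index types. -/
def reindexPiAddEquiv {α β : Type*} (e : α ≃ β) : (α → ℤ) ≃+ (β → ℤ) where
  toFun x b := x (e.symm b)
  invFun y a := y (e a)
  left_inv x := by funext a; simp
  right_inv y := by funext b; simp
  map_add' _ _ := rfl

/-- Packing a product of powers of ℤ into a single power of ℤ. -/
def packAddEquiv {I : Type*} {J : ℕ → Type*} :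
    ((I → ℤ) × ∀ k, (J k → ℤ)) ≃+ ((I ⊕ (Σ k, J k)) → ℤ) where
  toFun p := Sum.elim p.1 fun q => p.2 q.1 q.2
  invFun g := (fun i => g (.inl i), fun k j => g (.inr ⟨k, j⟩))
  left_inv p := rfl
  right_inv g := by funext x; cases x <;> rfl
  map_add' p q := by funext x; cases x <;> rfl

/-- The inverse limit of a sequence of finitely generated free abelian groups
with surjective bonding maps is isomorphic to ℤ^n for some n, or to ℤ^ω. -/
theorem inverse_limit_fg_free_abelian (A : ℕ → Type) [∀ k, AddCommGroup (A k)]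
    (hfree : ∀ k, ∃ n : ℕ, Nonempty (A k ≃+ (Fin n → ℤ)))
    (f : ∀ k, A (k + 1) →+ A k) (hsurj : ∀ k, Function.Surjective (f k))
    (L : AddSubgroup (∀ k, A k))
    (hL : (L : Set (∀ k, A k)) = {x | ∀ k, f k (x (k + 1)) = x k}) :
    (∃ n : ℕ, Nonempty (L ≃+ (Fin n → ℤ))) ∨ Nonempty (L ≃+ (ℕ → ℤ)) := by
  classical
  have hmemL : ∀ x : ∀ k, A k, x ∈ L ↔ ∀ k, f k (x (k + 1)) = x k := by
    intro x
    rw [← SetLike.mem_coe, hL]; rfl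
  -- choose bases for each A k
  have hbasis : ∀ k, ∃ n : ℕ, Nonempty (Module.Basis (Fin n) ℤ (A k)) := by
    intro k
    obtain ⟨n, ⟨e⟩⟩ := hfree k
    exact ⟨n, ⟨(Pi.basisFun ℤ (Fin n)).map e.toIntLinearEquiv.symm⟩⟩
  choose nA bA using hbasis
  haveI hFree : ∀ k, Module.Free ℤ (A k) := fun k =>
    Module.Free.of_basis (bA k).some
  haveI hProj : ∀ k, Module.Projective ℤ (A k) := fun k => inferInstance
  -- choose sections of the bonding maps
  have hsec : ∀ k, ∃ s : A k →+ A (k + 1), ∀ y, f k (s y) = y := by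
    intro k
    obtain ⟨s, hs⟩ := Module.projective_lifting_property
      ((f k).toIntLinearMap) LinearMap.id (hsurj k)
    exact ⟨s.toAddMonoidHom, fun y => LinearMap.congr_fun hs y⟩
  choose s hs using hsec
  -- kernels as submodules
  let K : ∀ k, Submodule ℤ (A (k + 1)) := fun k => LinearMap.ker (f k).toIntLinearMap
  have hmemK : ∀ k (x : A (k + 1)), x ∈ K k ↔ f k x = 0 := fun k x => Iff.rfl
  -- the recursive "unpacking" map
  let g : A 0 → (∀ k, K k) → ∀ k, A k := fun a c k =>
    Nat.rec a (fun n xn => s n xn + (c n).1) k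
  have hg0 : ∀ a c, g a c 0 = a := fun _ _ => rfl
  have hgS : ∀ a c k, g a c (k + 1) = s k (g a c k) + (c k).1 := fun _ _ _ => rfl
  have hgmem : ∀ a c, g a c ∈ L := by
    intro a c
    rw [hmemL]
    intro k
    rw [hgS]
    have h1 : f k ((c k).1) = 0 := (hmemK k _).mp (c k).2
    simp [map_add, hs, h1]
  -- the splitting equivalence
  have hLk : ∀ (x : L) (k : ℕ), f k ((x : ∀ k, A k) (k + 1)) = (x : ∀ k, A k) k :=
    fun x k => (hmemL x).mp x.2 k
  have hrec : ∀ (x : ∀ k, A k), (c : ∀ k, K k) → (∀ k, (c k).1 = x (k + 1) - s k (x k)) →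
      ∀ k, g (x 0) c k = x k := by
    intro x c hc k
    induction k with
    | zero => rfl
    | succ k ih => rw [hgS, ih, hc]; simp
  let e1 : L ≃+ (A 0 × ∀ k, K k) :=
    { toFun := fun x => ((x : ∀ k, A k) 0, fun k =>
        ⟨(x : ∀ k, A k) (k + 1) - s k ((x : ∀ k, A k) k), by
          rw [hmemK, map_sub, hs, hLk x k, sub_self]⟩)
      invFun := fun p => ⟨g p.1 p.2, hgmem _ _⟩
      left_inv := by
        intro x
        apply Subtype.ext
        funext k
        exact hrec (x : ∀ k, A k) _ (fun k => rfl) k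
      right_inv := by
        intro p
        refine Prod.ext rfl ?_
        funext k
        apply Subtype.ext
        show g p.1 p.2 (k + 1) - s k (g p.1 p.2 k) = (p.2 k).1
        rw [hgS]
        abel
      map_add' := by
        intro x y
        refine Prod.ext rfl ?_
        funext k
        apply Subtype.ext
        show ((x : ∀ k, A k) + (y : ∀ k, A k)) (k + 1)
            - s k (((x : ∀ k, A k) + (y : ∀ k, A k)) k) = _
        simp [map_add]
        abel }
  -- classify the kernels
  have hK : ∀ k, ∃ m : ℕ, Nonempty ((K k) ≃+ (Fin m → ℤ)) := by
    intro k
    obtain ⟨m, ⟨b⟩⟩ := (K k).nonempty_basis_of_pid (bA (k + 1)).some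
    exact ⟨m, ⟨b.equivFun.toAddEquiv⟩⟩
  choose m hm using hK
  obtain ⟨n0, ⟨eA0⟩⟩ := hfree 0
  let e2 : (A 0 × ∀ k, K k) ≃+ ((Fin n0 → ℤ) × ∀ k, (Fin (m k) → ℤ)) :=
    AddEquiv.prodCongr eA0 (AddEquiv.piCongrRight fun k => (hm k).some)
  let T : Type := Fin n0 ⊕ (Σ k, Fin (m k))
  let E : L ≃+ (T → ℤ) := (e1.trans e2).trans packAddEquiv
  cases finite_or_infinite T with
  | inl hfin =>
    haveI := Fintype.ofFinite T
    exact Or.inl ⟨Fintype.card T, ⟨E.trans (reindexPiAddEquiv (Fintype.equivFin T))⟩⟩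
  | inr hinf =>
    haveI : Countable T := inferInstance
    obtain ⟨d⟩ := nonempty_denumerable T
    exact Or.inr ⟨E.trans (reindexPiAddEquiv (@Denumerable.eqv T d))⟩
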